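/- Let 𝔫 be the 13-dimensional nilpotent Lie algebra with basis X₁,…,X₇, Y₁,…,Y₅, Z and nonzero basis brackets (up to antisymmetry) [X₁,X₃]=X₄, [X₁,X₄]=X₅, [X₁,X₅]=X₆, [X₁,X₆]=X₇, [X₂,X₃]=X₅, [X₂,X₄]=X₆, [X₃,X₄]=−X₇, [X₂,X₅]=X₇, [Y₁,Y₂]=Y₃, [Y₁,Y₃]=Y₄, [Y₁,Y₄]=Y₅, [Y₂,Y₃]=Y₅, [X₂,Y₁]=Z, [X₃,Y₂]=Z. Then: (a) the diagonal map D = Diag(1,2,3,4,5,6,7,−1,−2,−3,−4,−5,1) (with respect to the ordered basis X₁,…,X₇,Y₁,…,Y₅,Z) is an invertible derivation of 𝔫; (b) the center of 𝔫 is spanned by X₇, Y₅, Z, and the restriction of D to the center is Diag(7,−5,1); (c) every derivation of 𝔫 which is diagonalizable over ℝ and commutes with D is a real scalar multiple of D. -/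

import Mathlib

open scoped BigOperators

namespace RNPaper

/-- Structure constants of a skew-symmetric algebra on `ℝⁿ`:
an element of `V = Λ²(ℝⁿ)*⊗ℝⁿ` written in the basis `μ_{ijk}`. -/
abbrev SC (n : ℕ) := Fin n → Fin n → Fin n → ℝ

variable {n : ℕ}

def IsAntisym (c : SC n) : Prop := ∀ i j k, c j i k = - c i j k

/-- The bilinear map `ℝⁿ×ℝⁿ→ℝⁿ` associated to the structure constants `c`. -/
def br (c : SC n) (x y : Fin n → ℝ) : Fin n → ℝ :=
  fun k => ∑ i, ∑ j, x i * y j * c i j k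

def IsJacobi (c : SC n) : Prop :=
  ∀ x y z : Fin n → ℝ,
    br c (br c x y) z + br c (br c y z) x + br c (br c z x) y = 0

def nest (c : SC n) (v : ℕ → (Fin n → ℝ)) : ℕ → (Fin n → ℝ)
  | 0 => v 0
  | k + 1 => br c (v (k + 1)) (nest c v k)

def IsNilpotentBracket (c : SC n) : Prop :=
  ∃ N : ℕ, ∀ v : ℕ → (Fin n → ℝ), nest c v N = 0

/-- `c` is the Lie bracket of a nilpotent Lie algebra. -/
def IsNilpotentLie (c : SC n) : Prop := IsAntisym c ∧ IsJacobi c ∧ IsNilpotentBracket c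

/-- `D` is a derivation of the algebra with structure constants `c`. -/
def IsDeriv (c : SC n) (D : Matrix (Fin n) (Fin n) ℝ) : Prop :=
  ∀ x y : Fin n → ℝ,
    D.mulVec (br c x y) = br c (D.mulVec x) y + br c x (D.mulVec y)

/-- The inner product on `V` making the basis `μ_{ijk}` (`i<j`) orthonormal. -/
def innerV (c d : SC n) : ℝ := ∑ i, ∑ j, ∑ k, if i < j then c i j k * d i j k else 0

/-- The inner product `⟨A,B⟩ = tr(ABᵀ)` on matrices. -/
def innerM (A B : Matrix (Fin n) (Fin n) ℝ) : ℝ := ∑ a, ∑ b, A a b * B a b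

/-- The `gl(n,ℝ)`-action `E·μ = Eμ(·,·) − μ(E·,·) − μ(·,E·)`. -/
def lieAct (E : Matrix (Fin n) (Fin n) ℝ) (c : SC n) : SC n :=
  fun i j k => (∑ l, E k l * c i j l) - (∑ p, E p i * c p j k) - (∑ p, E p j * c i p k)

/-- The `GL(n,ℝ)`-action `(g·μ)(v,w) = g μ(g⁻¹v, g⁻¹w)` in structure constants. -/
def glAct (g : GL (Fin n) ℝ) (c : SC n) : SC n :=
  fun i j k => ∑ p, ∑ q, ∑ l,
    ((g⁻¹ : GL (Fin n) ℝ) : Matrix (Fin n) (Fin n) ℝ) p i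
      * ((g⁻¹ : GL (Fin n) ℝ) : Matrix (Fin n) (Fin n) ℝ) q j
      * ((g : Matrix (Fin n) (Fin n) ℝ) k l) * c p q l

/-- `m` is the moment map: `⟨m(μ),E⟩ = |μ|⁻²⟨E·μ,μ⟩` for all symmetric `E` and `μ ≠ 0`,
with `m(μ)` a symmetric matrix. -/
def IsMomentMap (m : SC n → Matrix (Fin n) (Fin n) ℝ) : Prop :=
  ∀ c : SC n, c ≠ 0 →
    (m c).IsSymm ∧
      ∀ E : Matrix (Fin n) (Fin n) ℝ, E.IsSymm →
        innerM (m c) E = (innerV c c)⁻¹ * innerV (lieAct E c) c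

/-- The centralizer of `D` in `GL(n,ℝ)`. -/
def centralizerSet (D : Matrix (Fin n) (Fin n) ℝ) : Set (GL (Fin n) ℝ) :=
  {g | (g : Matrix (Fin n) (Fin n) ℝ) * D = D * (g : Matrix (Fin n) (Fin n) ℝ)}

lemma one_mem_centralizerSet (D : Matrix (Fin n) (Fin n) ℝ) :
    (1 : GL (Fin n) ℝ) ∈ centralizerSet D := by
  simp [centralizerSet]

/-- `G_D`: the identity component of the centralizer of `D` in `GL(n,ℝ)`. -/
def GD (D : Matrix (Fin n) (Fin n) ℝ) : Set (GL (Fin n) ℝ) :=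
  Subtype.val '' connectedComponent (⟨1, one_mem_centralizerSet D⟩ : centralizerSet D)

/-- The orbit of `c` under a set `S ⊆ GL(n,ℝ)`. -/
def orbitOf (S : Set (GL (Fin n) ℝ)) (c : SC n) : Set (SC n) :=
  (fun g => glAct g c) '' S

noncomputable def diagAct (d : Fin n → ℝ) (c : SC n) : SC n :=
  fun i j k => (d k / (d i * d j)) * c i j k

/-- The orbit `T·μ` of the subgroup of diagonal matrices with positive entries. -/
def Torbit (c : SC n) : Set (SC n) :=
  {x | ∃ d : Fin n → ℝ, (∀ i, 0 < d i) ∧ x = diagAct d c}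

/-- The weight `F_{ij}^k = E_kk − E_ii − E_jj`. -/
def Fwt (i j k : Fin n) : Matrix (Fin n) (Fin n) ℝ :=
  Matrix.single k k 1 - Matrix.single i i 1 - Matrix.single j j 1

/-- `CH_μ`: the convex hull of the weights of `μ`. -/
def CHmu (c : SC n) : Set (Matrix (Fin n) (Fin n) ℝ) :=
  convexHull ℝ {M | ∃ i j k : Fin n, i < j ∧ c i j k ≠ 0 ∧ M = Fwt i j k}

/-- The diagonal part of a matrix. -/
def diagPart (A : Matrix (Fin n) (Fin n) ℝ) : Matrix (Fin n) (Fin n) ℝ :=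
  Matrix.diagonal fun i => A i i

/-- Membership in `𝔱ⁿ_{>0}`, the diagonal matrices with positive diagonal entries. -/
def DiagPos (E : Matrix (Fin n) (Fin n) ℝ) : Prop :=
  ∃ d : Fin n → ℝ, (∀ i, 0 < d i) ∧ E = Matrix.diagonal d

/-- The basis is nice for the bracket `c`. -/
def IsNice (c : SC n) : Prop :=
  (∀ i j k l, c i j k ≠ 0 → c i j l ≠ 0 → k = l) ∧
  ∀ i j r s k, c i j k ≠ 0 → c r s k ≠ 0 →
    ({i, j} : Finset (Fin n)) = {r, s} ∨
      Disjoint ({i, j} : Finset (Fin n)) ({r, s} : Finset (Fin n))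

/-- `A` is diagonalizable over `ℝ`. -/
def IsDiagonalizableR {N : ℕ} (A : Matrix (Fin N) (Fin N) ℝ) : Prop :=
  ∃ g : GL (Fin N) ℝ, ∃ d : Fin N → ℝ,
    A = (g : Matrix (Fin N) (Fin N) ℝ) * Matrix.diagonal d
      * ((g⁻¹ : GL (Fin N) ℝ) : Matrix (Fin N) (Fin N) ℝ)

/-- `D` extended by zero to `𝔰_D = ℝf ⊕ 𝔫` (index `0` corresponds to `f`). -/
def Dext (D : Matrix (Fin n) (Fin n) ℝ) : Matrix (Fin (n + 1)) (Fin (n + 1)) ℝ :=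
  Matrix.of (Fin.cons (fun _ => (0 : ℝ)) (fun k => Fin.cons (0 : ℝ) (fun j => D k j)))

/-- The bracket of `𝔫` extended by zero to `𝔰_D = ℝf ⊕ 𝔫`. -/
def cext (c : SC n) : SC (n + 1) :=
  Fin.cons (fun _ _ => 0)
    (fun i => Fin.cons (fun _ => 0) (fun j => Fin.cons 0 (fun k => c i j k)))

/-- Structure constants of the solvable extension `𝔰_D = ℝf ⊕ 𝔫`, `[f,X] = D X`. -/
def solvSC (D : Matrix (Fin n) (Fin n) ℝ) (c : SC n) : SC (n + 1) :=
  fun i j k =>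
    (if i = 0 then Dext D k j else 0) - (if j = 0 then Dext D k i else 0) + cext c i j k

/-- The matrix of `ad X`. -/
def adM {N : ℕ} (γ : SC N) (X : Fin N → ℝ) : Matrix (Fin N) (Fin N) ℝ :=
  Matrix.of fun k j => ∑ i, X i * γ i j k

/-- The bilinear form with Gram matrix `P`. -/
def bip {N : ℕ} (P : Matrix (Fin N) (Fin N) ℝ) (x y : Fin N → ℝ) : ℝ :=
  dotProduct x (P.mulVec y)

/-- `⟨Ric X,Y⟩` computed via the orthonormal basis `u`:
`−½Σ⟨[X,uₐ],[Y,uₐ]⟩ + ¼ΣΣ⟨[uₐ,u_b],X⟩⟨[uₐ,u_b],Y⟩ − ½ tr(ad X ∘ ad Y)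
 − ½(⟨[H,X],Y⟩+⟨[H,Y],X⟩)`. -/
noncomputable def ricForm {N : ℕ} (γ : SC N) (P : Matrix (Fin N) (Fin N) ℝ)
    (u : Fin N → (Fin N → ℝ)) (H : Fin N → ℝ) (X Y : Fin N → ℝ) : ℝ :=
  -(1 / 2) * (∑ a, bip P (br γ X (u a)) (br γ Y (u a)))
    + (1 / 4) * (∑ a, ∑ b, bip P (br γ (u a) (u b)) X * bip P (br γ (u a) (u b)) Y)
    - (1 / 2) * Matrix.trace (adM γ X * adM γ Y)
    - (1 / 2) * (bip P (br γ H X) Y + bip P (br γ H Y) X)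

/-- `D` is a Ricci negative derivation of `𝔫`: the solvable extension `𝔰_D = ℝf ⊕ 𝔫`
admits an inner product (with Gram matrix `P`) such that `f ⟂ 𝔫`, `D` is symmetric,
and the Ricci operator is negative definite. -/
def IsRicciNegative (c : SC n) (D : Matrix (Fin n) (Fin n) ℝ) : Prop :=
  ∃ P : Matrix (Fin (n + 1)) (Fin (n + 1)) ℝ, P.PosDef ∧
    (∀ j : Fin n, P 0 j.succ = 0) ∧
    (Dext D).transpose * P = P * Dext D ∧
    ∃ u : Fin (n + 1) → (Fin (n + 1) → ℝ),
      (∀ a b, bip P (u a) (u b) = if a = b then 1 else 0) ∧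
      ∃ H : Fin (n + 1) → ℝ,
        (∀ X : Fin (n + 1) → ℝ, bip P H X = Matrix.trace (adM (solvSC D c) X)) ∧
        ∀ X : Fin (n + 1) → ℝ, X ≠ 0 → ricForm (solvSC D c) P u H X X < 0

/-- The bracket `[e_i,e_j] = v e_k` (and `[e_j,e_i] = −v e_k`) as an element of `V`. -/
def brk {N : ℕ} (i j k : Fin N) (v : ℝ) : SC N :=
  fun p q r =>
    if p = i ∧ q = j ∧ r = k then v else if p = j ∧ q = i ∧ r = k then -v else 0


/-- The center `𝔷(𝔫) = {x : [x,𝔫] = 0}`. -/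
def centerSet {N : ℕ} (c : SC N) : Set (Fin N → ℝ) := {x | ∀ y, br c x y = 0}

/-- Proposition 4.4 (i): basis `X₁,…,X₇ = e₀,…,e₆`, `Y₁,…,Y₅ = e₇,…,e₁₁`, `Z = e₁₂`. -/
def c18 : SC 13 :=
  brk 0 2 3 1 + brk 0 3 4 1 + brk 0 4 5 1 + brk 0 5 6 1 +
    brk 1 2 4 1 + brk 1 3 5 1 + brk 2 3 6 (-1) + brk 1 4 6 1 +
    brk 7 8 9 1 + brk 7 9 10 1 + brk 7 10 11 1 + brk 8 9 11 1 +
    brk 1 7 12 1 + brk 2 8 12 1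

noncomputable def D18 : Matrix (Fin 13) (Fin 13) ℝ :=
  Matrix.diagonal ![1, 2, 3, 4, 5, 6, 7, -1, -2, -3, -4, -5, 1]


/-! ### Auxiliary material for the proof of `statement18` -/

def brkZ' {N : ℕ} (i j k : Fin N) (v : ℤ) : Fin N → Fin N → Fin N → ℤ :=
  fun p q r =>
    if p = i ∧ q = j ∧ r = k then v else if p = j ∧ q = i ∧ r = k then -v else 0

def cZ' : Fin 13 → Fin 13 → Fin 13 → ℤ := fun i j k =>
  brkZ' 0 2 3 1 i j k + brkZ' 0 3 4 1 i j k + brkZ' 0 4 5 1 i j k + brkZ' 0 5 6 1 i j k +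
    brkZ' 1 2 4 1 i j k + brkZ' 1 3 5 1 i j k + brkZ' 2 3 6 (-1) i j k + brkZ' 1 4 6 1 i j k +
    brkZ' 7 8 9 1 i j k + brkZ' 7 9 10 1 i j k + brkZ' 7 10 11 1 i j k + brkZ' 8 9 11 1 i j k +
    brkZ' 1 7 12 1 i j k + brkZ' 2 8 12 1 i j k

def dZ' : Fin 13 → ℤ := ![1, 2, 3, 4, 5, 6, 7, -1, -2, -3, -4, -5, 1]

lemma c18_cast (i j k : Fin 13) : c18 i j k = ((cZ' i j k : ℤ) : ℝ) := by
  simp only [c18, cZ', brk, brkZ', Pi.add_apply, Int.cast_add,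
    apply_ite (fun z : ℤ => (z : ℝ))]
  norm_num

lemma dR_cast (i : Fin 13) :
    (![1, 2, 3, 4, 5, 6, 7, -1, -2, -3, -4, -5, 1] : Fin 13 → ℝ) i = ((dZ' i : ℤ) : ℝ) := by
  fin_cases i <;> norm_num [dZ']

lemma keyZ' : ∀ i j k : Fin 13, dZ' k * cZ' i j k = (dZ' i + dZ' j) * cZ' i j k := by decide

lemma key18 (i j k : Fin 13) :
    (![1, 2, 3, 4, 5, 6, 7, -1, -2, -3, -4, -5, 1] : Fin 13 → ℝ) k * c18 i j k
      = (![1, 2, 3, 4, 5, 6, 7, -1, -2, -3, -4, -5, 1] : Fin 13 → ℝ) i * c18 i j k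
        + (![1, 2, 3, 4, 5, 6, 7, -1, -2, -3, -4, -5, 1] : Fin 13 → ℝ) j * c18 i j k := by
  rw [c18_cast, dR_cast, dR_cast, dR_cast]
  exact_mod_cast congrArg (fun z : ℤ => (z : ℝ))
    (by linarith [keyZ' i j k] : dZ' k * cZ' i j k = dZ' i * cZ' i j k + dZ' j * cZ' i j k)

lemma deriv18 : IsDeriv c18 D18 := by
  intro x y
  funext k
  simp only [D18, Matrix.mulVec_diagonal, br, Pi.add_apply, Finset.mul_sum,
    ← Finset.sum_add_distrib]
  refine Finset.sum_congr rfl fun i _ => ?_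
  refine Finset.sum_congr rfl fun j _ => ?_
  linear_combination (x i * y j) * key18 i j k

noncomputable def Dinv18 : Matrix (Fin 13) (Fin 13) ℝ :=
  Matrix.diagonal ![1, 1/2, 1/3, 1/4, 1/5, 1/6, 1/7, -1, -1/2, -1/3, -1/4, -1/5, 1]

lemma hfun18 : (fun i => (![1, 2, 3, 4, 5, 6, 7, -1, -2, -3, -4, -5, 1] : Fin 13 → ℝ) i *
    (![1, 1/2, 1/3, 1/4, 1/5, 1/6, 1/7, -1, -1/2, -1/3, -1/4, -1/5, 1] : Fin 13 → ℝ) i)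
    = fun _ => (1:ℝ) := by
  funext i
  fin_cases i <;> norm_num [Matrix.cons_val_succ]

lemma unit18 : IsUnit D18 := by
  have h1 : D18 * Dinv18 = 1 := by
    rw [D18, Dinv18, Matrix.diagonal_mul_diagonal, hfun18, Matrix.diagonal_one]
  have h2 : Dinv18 * D18 = 1 := by
    rw [D18, Dinv18, Matrix.diagonal_mul_diagonal,
      show (fun i => (![1, 1/2, 1/3, 1/4, 1/5, 1/6, 1/7, -1, -1/2, -1/3, -1/4, -1/5, 1] : Fin 13 → ℝ) i
          * (![1, 2, 3, 4, 5, 6, 7, -1, -2, -3, -4, -5, 1] : Fin 13 → ℝ) i)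
        = (fun i => (![1, 2, 3, 4, 5, 6, 7, -1, -2, -3, -4, -5, 1] : Fin 13 → ℝ) i
          * (![1, 1/2, 1/3, 1/4, 1/5, 1/6, 1/7, -1, -1/2, -1/3, -1/4, -1/5, 1] : Fin 13 → ℝ) i)
        from funext fun i => mul_comm _ _, hfun18, Matrix.diagonal_one]
  exact ⟨⟨D18, Dinv18, h1, h2⟩, rfl⟩

lemma mv18 (m : Fin 13) (t : ℝ) (ht : ((dZ' m : ℤ) : ℝ) = t) :
    D18.mulVec (Pi.single m 1) = t • (Pi.single m (1 : ℝ) : Fin 13 → ℝ) := by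
  funext i
  rw [D18, Matrix.mulVec_diagonal, dR_cast, Pi.smul_apply]
  rcases eq_or_ne i m with rfl | h
  · rw [Pi.single_eq_same, ht, smul_eq_mul, mul_one]
  · rw [Pi.single_eq_of_ne h, smul_eq_mul, mul_zero, mul_zero]

/-! ### Bracket computation lemmas -/

lemma br_single_right (c : SC 13) (x : Fin 13 → ℝ) (j0 k : Fin 13) :
    br c x (Pi.single j0 1) k = ∑ i, x i * c i j0 k := by
  simp [br, Pi.single_apply, mul_ite, ite_mul, Finset.sum_ite_eq']

lemma br_single_left (c : SC 13) (y : Fin 13 → ℝ) (i0 k : Fin 13) :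
    br c (Pi.single i0 1) y k = ∑ j, y j * c i0 j k := by
  simp [br, Pi.single_apply, mul_ite, ite_mul, Finset.sum_ite_eq]

lemma mulVec_single' (D : Matrix (Fin 13) (Fin 13) ℝ) (j0 : Fin 13) :
    D.mulVec (Pi.single j0 1) = fun i => D i j0 := by
  funext i
  simp [Matrix.mulVec, dotProduct, Pi.single_apply, mul_ite, Finset.sum_ite_eq']

lemma sum_delta (x f : Fin 13 → ℝ) (p : Fin 13) (s : ℝ)
    (h : ∀ i, f i = if i = p then s else 0) : (∑ i, x i * f i) = x p * s := by
  simp [h, mul_ite, Finset.sum_ite_eq']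

lemma deriv_eq (D' : Matrix (Fin 13) (Fin 13) ℝ) (hD' : IsDeriv c18 D') (i j k : Fin 13) :
    (∑ l, D' k l * c18 i j l) = (∑ p, D' p i * c18 p j k) + (∑ p, D' p j * c18 i p k) := by
  have h := congrFun (hD' (Pi.single i 1) (Pi.single j 1)) k
  rw [mulVec_single', mulVec_single'] at h
  have hbr : br c18 (Pi.single i 1) (Pi.single j 1) = fun l => c18 i j l := by
    funext l
    rw [br_single_right]
    simp [Pi.single_apply, ite_mul, Finset.sum_ite_eq]
  rw [hbr] at h
  have hL : (D'.mulVec fun l => c18 i j l) k = ∑ l, D' k l * c18 i j l := by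
    simp [Matrix.mulVec, dotProduct]
  rw [Pi.add_apply, br_single_right, br_single_left] at h
  rw [← hL, h]

lemma cfun3 (i0 j0 m : Fin 13) (sz : ℤ) (h : ∀ l, cZ' i0 j0 l = if l = m then sz else 0) :
    ∀ l, c18 i0 j0 l = if l = m then (sz : ℝ) else 0 := by
  intro l; rw [c18_cast, h l]; simp [apply_ite (fun z : ℤ => (z : ℝ))]

lemma cfun1 (j0 k0 p : Fin 13) (sz : ℤ) (h : ∀ l, cZ' l j0 k0 = if l = p then sz else 0) :
    ∀ l, c18 l j0 k0 = if l = p then (sz : ℝ) else 0 := by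
  intro l; rw [c18_cast, h l]; simp [apply_ite (fun z : ℤ => (z : ℝ))]

lemma cfun2 (i0 k0 q : Fin 13) (sz : ℤ) (h : ∀ l, cZ' i0 l k0 = if l = q then sz else 0) :
    ∀ l, c18 i0 l k0 = if l = q then (sz : ℝ) else 0 := by
  intro l; rw [c18_cast, h l]; simp [apply_ite (fun z : ℤ => (z : ℝ))]

lemma eqnZ (D' : Matrix (Fin 13) (Fin 13) ℝ) (hD' : IsDeriv c18 D')
    (i j k m p q : Fin 13) (s sp sq : ℤ)
    (h3 : ∀ l, cZ' i j l = if l = m then s else 0)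
    (h1 : ∀ l, cZ' l j k = if l = p then sp else 0)
    (h2 : ∀ l, cZ' i l k = if l = q then sq else 0) :
    D' k m * (s : ℝ) = D' p i * (sp : ℝ) + D' q j * (sq : ℝ) := by
  have h := deriv_eq D' hD' i j k
  rw [sum_delta (D' k) _ m (s : ℝ) (cfun3 i j m s h3),
    sum_delta (fun l => D' l i) _ p (sp : ℝ) (cfun1 j k p sp h1),
    sum_delta (fun l => D' l j) _ q (sq : ℝ) (cfun2 i k q sq h2)] at h
  exact h

/-! ### The center -/

lemma br_add_left (c : SC 13) (x1 x2 y : Fin 13 → ℝ) :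
    br c (x1 + x2) y = br c x1 y + br c x2 y := by
  funext k
  simp [br, add_mul, Finset.sum_add_distrib]

lemma br_smul_left (c : SC 13) (r : ℝ) (x y : Fin 13 → ℝ) :
    br c (r • x) y = r • br c x y := by
  funext k
  simp only [br, Pi.smul_apply, smul_eq_mul, Finset.mul_sum]
  refine Finset.sum_congr rfl fun i _ => Finset.sum_congr rfl fun j _ => by ring

def centerSub : Submodule ℝ (Fin 13 → ℝ) where
  carrier := centerSet c18
  add_mem' := fun ha hb y => by rw [br_add_left, ha y, hb y, add_zero]
  zero_mem' := fun y => by funext k; simp [br]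
  smul_mem' := fun r x hx y => by rw [br_smul_left, hx y, smul_zero]

lemma coord_zero (x : Fin 13 → ℝ) (hx : x ∈ centerSet c18) (j k p : Fin 13) (sz : ℤ)
    (hsz : (sz : ℝ) ≠ 0) (h : ∀ i, cZ' i j k = if i = p then sz else 0) : x p = 0 := by
  have hy := congrFun (hx (Pi.single j 1)) k
  rw [br_single_right, sum_delta x _ p (sz : ℝ) (cfun1 j k p sz h)] at hy
  rw [Pi.zero_apply] at hy
  exact (mul_eq_zero.mp hy).resolve_right hsz

lemma gen_center (m : Fin 13) (hm : ∀ j k, cZ' m j k = 0) :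
    Pi.single m (1:ℝ) ∈ centerSet c18 := by
  intro y; funext k
  rw [br_single_left]
  have h0 : ∀ j, c18 m j k = 0 := fun j => by rw [c18_cast, hm j k]; norm_num
  simp [h0]

lemma center18 : centerSet c18 = (Submodule.span ℝ
    ({Pi.single (6 : Fin 13) (1 : ℝ), Pi.single (11 : Fin 13) (1 : ℝ),
      Pi.single (12 : Fin 13) (1 : ℝ)} : Set (Fin 13 → ℝ)) : Set (Fin 13 → ℝ)) := by
  apply Set.Subset.antisymm
  · intro x hx
    have e0 : x 0 = 0 := coord_zero x hx 2 3 0 1 (by norm_num) (by decide)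
    have e1 : x 1 = 0 := coord_zero x hx 2 4 1 1 (by norm_num) (by decide)
    have e2 : x 2 = 0 := coord_zero x hx 8 12 2 1 (by norm_num) (by decide)
    have e3 : x 3 = 0 := coord_zero x hx 0 4 3 (-1) (by norm_num) (by decide)
    have e4 : x 4 = 0 := coord_zero x hx 0 5 4 (-1) (by norm_num) (by decide)
    have e5 : x 5 = 0 := coord_zero x hx 0 6 5 (-1) (by norm_num) (by decide)
    have e7 : x 7 = 0 := coord_zero x hx 8 9 7 1 (by norm_num) (by decide)
    have e8 : x 8 = 0 := coord_zero x hx 7 9 8 (-1) (by norm_num) (by decide)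
    have e9 : x 9 = 0 := coord_zero x hx 7 10 9 (-1) (by norm_num) (by decide)
    have e10 : x 10 = 0 := coord_zero x hx 7 11 10 (-1) (by norm_num) (by decide)
    have hxe : x = x 6 • (Pi.single (6:Fin 13) (1:ℝ) : Fin 13 → ℝ)
        + x 11 • (Pi.single (11:Fin 13) (1:ℝ) : Fin 13 → ℝ)
        + x 12 • (Pi.single (12:Fin 13) (1:ℝ) : Fin 13 → ℝ) := by
      funext m
      simp only [Pi.add_apply, Pi.smul_apply, smul_eq_mul]
      fin_cases m
      · simpa [Pi.single_apply] using e0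
      · simpa [Pi.single_apply] using e1
      · simpa [Pi.single_apply] using e2
      · simpa [Pi.single_apply] using e3
      · simpa [Pi.single_apply] using e4
      · simpa [Pi.single_apply] using e5
      · simp [Pi.single_apply]
      · simpa [Pi.single_apply] using e7
      · simpa [Pi.single_apply] using e8
      · simpa [Pi.single_apply] using e9
      · simpa [Pi.single_apply] using e10
      · simp [Pi.single_apply]
      · simp [Pi.single_apply]
    rw [SetLike.mem_coe, hxe]
    refine Submodule.add_mem _ (Submodule.add_mem _ ?_ ?_) ?_ <;>
      exact Submodule.smul_mem _ _ (Submodule.subset_span (by simp))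
  · intro x hx
    rw [SetLike.mem_coe] at hx
    have hle : Submodule.span ℝ
        ({Pi.single (6 : Fin 13) (1 : ℝ), Pi.single (11 : Fin 13) (1 : ℝ),
          Pi.single (12 : Fin 13) (1 : ℝ)} : Set (Fin 13 → ℝ)) ≤ centerSub := by
      rw [Submodule.span_le]
      intro z hz
      simp only [Set.mem_insert_iff, Set.mem_singleton_iff] at hz
      rcases hz with rfl | rfl | rfl
      · exact gen_center 6 (by decide)
      · exact gen_center 11 (by decide)
      · exact gen_center 12 (by decide)
    exact hle hx

/-! ### Diagonalizable squares -/

lemma diag_sq {N : ℕ} {A : Matrix (Fin N) (Fin N) ℝ} (hA : IsDiagonalizableR A)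
    (lam : ℝ) (v : Fin N → ℝ)
    (h : (A - lam • 1).mulVec ((A - lam • 1).mulVec v) = 0) :
    (A - lam • 1).mulVec v = 0 := by
  obtain ⟨g, d, rfl⟩ := hA
  set G : Matrix (Fin N) (Fin N) ℝ := (g : Matrix (Fin N) (Fin N) ℝ) with hG
  set Gi : Matrix (Fin N) (Fin N) ℝ := ((g⁻¹ : GL (Fin N) ℝ) : Matrix (Fin N) (Fin N) ℝ) with hGi
  have hGGi : G * Gi = 1 := by
    rw [hG, hGi, ← Units.val_mul, mul_inv_cancel]; rfl
  have hGiG : Gi * G = 1 := by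
    rw [hG, hGi, ← Units.val_mul, inv_mul_cancel]; rfl
  set e : Fin N → ℝ := fun i => d i - lam with he
  have hkey : G * Matrix.diagonal d * Gi - lam • 1 = G * Matrix.diagonal e * Gi := by
    have h1 : Matrix.diagonal e = Matrix.diagonal d - lam • 1 := by
      ext i j
      by_cases hij : i = j <;>
        simp [Matrix.diagonal_apply, hij, Matrix.one_apply, he]
    rw [h1, Matrix.mul_sub, Matrix.sub_mul]
    congr 1
    rw [Matrix.mul_smul, Matrix.mul_one, Matrix.smul_mul, hGGi]
  rw [hkey] at h ⊢
  set w : Fin N → ℝ := Gi.mulVec v with hw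
  have hmv : ∀ u : Fin N → ℝ, (G * Matrix.diagonal e * Gi).mulVec u
      = G.mulVec ((Matrix.diagonal e).mulVec (Gi.mulVec u)) := by
    intro u
    rw [← Matrix.mulVec_mulVec, ← Matrix.mulVec_mulVec]
  have cancel : ∀ y : Fin N → ℝ, Gi.mulVec (G.mulVec y) = y := by
    intro y
    rw [Matrix.mulVec_mulVec, hGiG, Matrix.one_mulVec]
  have hsq : (Matrix.diagonal e).mulVec ((Matrix.diagonal e).mulVec w) = 0 := by
    have h2 := congrArg (fun z => Gi.mulVec z) h
    simp only [Matrix.mulVec_zero] at h2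
    rw [hmv, hmv] at h2
    simp only [cancel] at h2
    exact h2
  have hone : (Matrix.diagonal e).mulVec w = 0 := by
    funext i
    have h4 := congrFun hsq i
    simp only [Matrix.mulVec_diagonal, Pi.zero_apply] at h4
    simp only [Matrix.mulVec_diagonal, Pi.zero_apply]
    rcases mul_eq_zero.mp h4 with h0 | h0
    · rw [h0, zero_mul]
    · exact h0
  rw [hmv, ← hw, hone, Matrix.mulVec_zero]


set_option maxHeartbeats 1600000 in
theorem statement18 :
    (IsDeriv c18 D18 ∧ IsUnit D18) ∧
    (centerSet c18 = (Submodule.span ℝ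
        ({Pi.single (6 : Fin 13) (1 : ℝ), Pi.single (11 : Fin 13) (1 : ℝ),
          Pi.single (12 : Fin 13) (1 : ℝ)} : Set (Fin 13 → ℝ)) : Set (Fin 13 → ℝ)) ∧
      D18.mulVec (Pi.single (6 : Fin 13) 1) =
        (7 : ℝ) • (Pi.single (6 : Fin 13) (1 : ℝ) : Fin 13 → ℝ) ∧
      D18.mulVec (Pi.single (11 : Fin 13) 1) =
        (-5 : ℝ) • (Pi.single (11 : Fin 13) (1 : ℝ) : Fin 13 → ℝ) ∧
      D18.mulVec (Pi.single (12 : Fin 13) 1) =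
        (1 : ℝ) • (Pi.single (12 : Fin 13) (1 : ℝ) : Fin 13 → ℝ)) ∧
    (∀ D' : Matrix (Fin 13) (Fin 13) ℝ, IsDeriv c18 D' → IsDiagonalizableR D' →
      D' * D18 = D18 * D' → ∃ t : ℝ, D' = t • D18) := by
  refine ⟨⟨deriv18, unit18⟩,
    ⟨center18, mv18 6 7 (by rw [show dZ' 6 = 7 from by decide]; norm_num),
      mv18 11 (-5) (by rw [show dZ' 11 = -5 from by decide]; norm_num),
      mv18 12 1 (by rw [show dZ' 12 = 1 from by decide]; norm_num)⟩, ?_⟩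
  intro D' hD' hdiag hcomm
  set t := D' 0 0 with ht
  have E1 := eqnZ D' hD' 0 2 3 3 0 2 1 1 1 (by decide) (by decide) (by decide)
  have E2 := eqnZ D' hD' 0 3 4 4 0 3 1 1 1 (by decide) (by decide) (by decide)
  have E3 := eqnZ D' hD' 0 4 5 5 0 4 1 1 1 (by decide) (by decide) (by decide)
  have E4 := eqnZ D' hD' 0 5 6 6 0 5 1 1 1 (by decide) (by decide) (by decide)
  have E5 := eqnZ D' hD' 1 2 4 4 1 2 1 1 1 (by decide) (by decide) (by decide)
  have E7 := eqnZ D' hD' 2 3 6 6 2 3 (-1) (-1) (-1) (by decide) (by decide) (by decide)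
  have E9 := eqnZ D' hD' 7 8 9 9 7 8 1 1 1 (by decide) (by decide) (by decide)
  have E10 := eqnZ D' hD' 7 9 10 10 7 9 1 1 1 (by decide) (by decide) (by decide)
  have E11 := eqnZ D' hD' 7 10 11 11 7 10 1 1 1 (by decide) (by decide) (by decide)
  have E12 := eqnZ D' hD' 8 9 11 11 8 9 1 1 1 (by decide) (by decide) (by decide)
  have E13 := eqnZ D' hD' 1 7 12 12 1 7 1 1 1 (by decide) (by decide) (by decide)
  have E14 := eqnZ D' hD' 2 8 12 12 2 8 1 1 1 (by decide) (by decide) (by decide)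
  have E15 := eqnZ D' hD' 12 2 3 0 0 0 0 1 0 (by decide) (by decide) (by decide)
  push_cast at E1 E2 E3 E4 E5 E7 E9 E10 E11 E12 E13 E14 E15
  have hb : D' 0 12 = 0 := by linarith
  have g1 : D' 1 1 = 2 * t := by linarith
  have g2 : D' 2 2 = 3 * t := by linarith
  have g3 : D' 3 3 = 4 * t := by linarith
  have g4 : D' 4 4 = 5 * t := by linarith
  have g5 : D' 5 5 = 6 * t := by linarith
  have g6 : D' 6 6 = 7 * t := by linarith
  have g7 : D' 7 7 = -t := by linarith
  have g8 : D' 8 8 = -2 * t := by linarith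
  have g9 : D' 9 9 = -3 * t := by linarith
  have g10 : D' 10 10 = -4 * t := by linarith
  have g11 : D' 11 11 = -5 * t := by linarith
  have g12 : D' 12 12 = t := by linarith
  -- zero pattern from commuting with D18
  have hz : ∀ i j : Fin 13, dZ' i ≠ dZ' j → D' i j = 0 := by
    intro i j hne
    have h := congrFun (congrFun hcomm i) j
    rw [D18, Matrix.mul_diagonal, Matrix.diagonal_mul, dR_cast, dR_cast] at h
    have h2 : D' i j * (((dZ' j : ℤ) : ℝ) - ((dZ' i : ℤ) : ℝ)) = 0 := by linear_combination h
    rcases mul_eq_zero.mp h2 with h0 | h0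
    · exact h0
    · exfalso
      apply hne
      exact_mod_cast (sub_eq_zero.mp h0).symm
  -- the (12,0) entry vanishes by diagonalizability
  have hcol0 : (D' - t • 1).mulVec (Pi.single (0:Fin 13) 1)
      = D' 12 0 • (Pi.single (12:Fin 13) (1:ℝ) : Fin 13 → ℝ) := by
    rw [Matrix.sub_mulVec, Matrix.smul_mulVec, Matrix.one_mulVec, mulVec_single']
    funext kk
    simp only [Pi.sub_apply, Pi.smul_apply, smul_eq_mul]
    fin_cases kk
    · simp [Pi.single_apply, ht]
    · simp [Pi.single_apply]; exact hz _ _ (by decide)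
    · simp [Pi.single_apply]; exact hz _ _ (by decide)
    · simp [Pi.single_apply]; exact hz _ _ (by decide)
    · simp [Pi.single_apply]; exact hz _ _ (by decide)
    · simp [Pi.single_apply]; exact hz _ _ (by decide)
    · simp [Pi.single_apply]; exact hz _ _ (by decide)
    · simp [Pi.single_apply]; exact hz _ _ (by decide)
    · simp [Pi.single_apply]; exact hz _ _ (by decide)
    · simp [Pi.single_apply]; exact hz _ _ (by decide)
    · simp [Pi.single_apply]; exact hz _ _ (by decide)
    · simp [Pi.single_apply]; exact hz _ _ (by decide)
    · simp [Pi.single_apply]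
  have hcol12 : (D' - t • 1).mulVec (Pi.single (12:Fin 13) 1) = 0 := by
    rw [Matrix.sub_mulVec, Matrix.smul_mulVec, Matrix.one_mulVec, mulVec_single']
    funext kk
    simp only [Pi.sub_apply, Pi.smul_apply, smul_eq_mul, Pi.zero_apply]
    fin_cases kk
    · simp [Pi.single_apply]; exact hb
    · simp [Pi.single_apply]; exact hz _ _ (by decide)
    · simp [Pi.single_apply]; exact hz _ _ (by decide)
    · simp [Pi.single_apply]; exact hz _ _ (by decide)
    · simp [Pi.single_apply]; exact hz _ _ (by decide)
    · simp [Pi.single_apply]; exact hz _ _ (by decide)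
    · simp [Pi.single_apply]; exact hz _ _ (by decide)
    · simp [Pi.single_apply]; exact hz _ _ (by decide)
    · simp [Pi.single_apply]; exact hz _ _ (by decide)
    · simp [Pi.single_apply]; exact hz _ _ (by decide)
    · simp [Pi.single_apply]; exact hz _ _ (by decide)
    · simp [Pi.single_apply]; exact hz _ _ (by decide)
    · simp [Pi.single_apply, g12]
  have hsq : (D' - t • 1).mulVec ((D' - t • 1).mulVec (Pi.single (0:Fin 13) 1)) = 0 := by
    rw [hcol0, Matrix.mulVec_smul, hcol12, smul_zero]
  have hker := diag_sq hdiag t (Pi.single (0:Fin 13) 1) hsq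
  rw [hcol0] at hker
  have hs : D' 12 0 = 0 := by
    have h5 := congrFun hker 12
    simpa [Pi.single_apply] using h5
  refine ⟨t, ?_⟩
  ext i j
  by_cases hij : i = j
  · subst hij
    rw [Matrix.smul_apply, D18, Matrix.diagonal_apply_eq, smul_eq_mul, dR_cast]
    fin_cases i
    · show D' 0 0 = t * ((dZ' 0 : ℤ) : ℝ)
      rw [show dZ' 0 = 1 from by decide]; push_cast; linarith
    · show D' 1 1 = t * ((dZ' 1 : ℤ) : ℝ)
      rw [show dZ' 1 = 2 from by decide]; push_cast; linarith
    · show D' 2 2 = t * ((dZ' 2 : ℤ) : ℝ)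
      rw [show dZ' 2 = 3 from by decide]; push_cast; linarith
    · show D' 3 3 = t * ((dZ' 3 : ℤ) : ℝ)
      rw [show dZ' 3 = 4 from by decide]; push_cast; linarith
    · show D' 4 4 = t * ((dZ' 4 : ℤ) : ℝ)
      rw [show dZ' 4 = 5 from by decide]; push_cast; linarith
    · show D' 5 5 = t * ((dZ' 5 : ℤ) : ℝ)
      rw [show dZ' 5 = 6 from by decide]; push_cast; linarith
    · show D' 6 6 = t * ((dZ' 6 : ℤ) : ℝ)
      rw [show dZ' 6 = 7 from by decide]; push_cast; linarith
    · show D' 7 7 = t * ((dZ' 7 : ℤ) : ℝ)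
      rw [show dZ' 7 = -1 from by decide]; push_cast; linarith
    · show D' 8 8 = t * ((dZ' 8 : ℤ) : ℝ)
      rw [show dZ' 8 = -2 from by decide]; push_cast; linarith
    · show D' 9 9 = t * ((dZ' 9 : ℤ) : ℝ)
      rw [show dZ' 9 = -3 from by decide]; push_cast; linarith
    · show D' 10 10 = t * ((dZ' 10 : ℤ) : ℝ)
      rw [show dZ' 10 = -4 from by decide]; push_cast; linarith
    · show D' 11 11 = t * ((dZ' 11 : ℤ) : ℝ)
      rw [show dZ' 11 = -5 from by decide]; push_cast; linarith
    · show D' 12 12 = t * ((dZ' 12 : ℤ) : ℝ)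
      rw [show dZ' 12 = 1 from by decide]; push_cast; linarith
  · rw [Matrix.smul_apply, D18, Matrix.diagonal_apply_ne _ hij, smul_zero]
    fin_cases i <;> fin_cases j <;>
      first
        | exact absurd rfl hij
        | exact hb
        | exact hs
        | exact hz _ _ (by decide)

end RNPaper
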